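/- arXiv:2103.05589 — 3 statements merged into one kernel-verified Lean document; each statement's English description precedes it below -/
import Mathlib

section
/- Let R be a commutative ring, a, b, c, d ∈ R, k a natural number, and μ : R[z] → R an R-linear map on the univariate polynomial ring. Then in the polynomial ring R[X,Y] one has Σ_{j=0}^{k} (−1)^j C(k,j) · μ((a·z + b)^j (c·z + d)^{k−j}) · X^{k−j} Y^j = Σ_{ℓ=0}^{k} (−1)^ℓ C(k,ℓ) · μ(z^ℓ) · (dX − bY)^{k−ℓ} (−cX + aY)^ℓ. -/
open Polynomial MvPolynomial Finset

private noncomputable def psiAux (R : Type*) [CommRing R] (μ : Polynomial R →ₗ[R] R) :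
    Polynomial (MvPolynomial (Fin 2) R) →ₗ[MvPolynomial (Fin 2) R] MvPolynomial (Fin 2) R :=
  Polynomial.lsum fun n => LinearMap.toSpanSingleton _ _ (MvPolynomial.C (μ (Polynomial.X ^ n)))

private lemma psiAux_map (R : Type*) [CommRing R] (μ : Polynomial R →ₗ[R] R)
    (f : Polynomial R) :
    psiAux R μ (f.map (MvPolynomial.C : R →+* MvPolynomial (Fin 2) R)) = MvPolynomial.C (μ f) := by
  induction f using Polynomial.induction_on' with
  | add p q hp hq => simp [hp, hq]
  | monomial n r =>
      rw [Polynomial.map_monomial, psiAux, Polynomial.lsum_apply,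
        Polynomial.sum_monomial_index _ _ (by simp)]
      rw [LinearMap.toSpanSingleton_apply, smul_eq_mul, ← map_mul,
        ← Polynomial.C_mul_X_pow_eq_monomial, ← Polynomial.smul_eq_C_mul, map_smul,
        smul_eq_mul]

set_option maxHeartbeats 1000000 in
open Polynomial MvPolynomial Finset in
/-- For a commutative ring `R`, `a b c d ∈ R`, `k : ℕ`, and an `R`-linear
functional `μ` on `R[z]`, one has, in `R[X,Y]`,
`Σ_{j=0}^{k} (−1)^j C(k,j) μ((az+b)^j (cz+d)^{k−j}) X^{k−j} Y^j
  = Σ_{ℓ=0}^{k} (−1)^ℓ C(k,ℓ) μ(z^ℓ) (dX − bY)^{k−ℓ} (−cX + aY)^ℓ`. -/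
theorem specialization_equivariance (R : Type*) [CommRing R] (a b c d : R) (k : ℕ)
    (μ : Polynomial R →ₗ[R] R) :
    ∑ j ∈ range (k + 1),
        (-1 : MvPolynomial (Fin 2) R) ^ j * (k.choose j : MvPolynomial (Fin 2) R) *
          MvPolynomial.C (μ ((Polynomial.C a * Polynomial.X + Polynomial.C b) ^ j *
              (Polynomial.C c * Polynomial.X + Polynomial.C d) ^ (k - j))) *
          (MvPolynomial.X 0) ^ (k - j) * (MvPolynomial.X 1) ^ j
      = ∑ ℓ ∈ range (k + 1),
          (-1 : MvPolynomial (Fin 2) R) ^ ℓ * (k.choose ℓ : MvPolynomial (Fin 2) R) *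
            MvPolynomial.C (μ (Polynomial.X ^ ℓ)) *
            (MvPolynomial.C d * MvPolynomial.X 0 - MvPolynomial.C b * MvPolynomial.X 1) ^ (k - ℓ) *
            (-(MvPolynomial.C c) * MvPolynomial.X 0 + MvPolynomial.C a * MvPolynomial.X 1) ^ ℓ := by
  set S := MvPolynomial (Fin 2) R
  set ψ := psiAux R μ with hψ
  set F : Polynomial S :=
    ((Polynomial.C c * Polynomial.X + Polynomial.C d).map (MvPolynomial.C : R →+* S)) *
        Polynomial.C (MvPolynomial.X 0) -
      ((Polynomial.C a * Polynomial.X + Polynomial.C b).map (MvPolynomial.C : R →+* S)) *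
        Polynomial.C (MvPolynomial.X 1) with hF
  have h1 : ψ (F ^ k) = ∑ j ∈ range (k + 1),
      (-1 : S) ^ j * (k.choose j : S) *
        MvPolynomial.C (μ ((Polynomial.C a * Polynomial.X + Polynomial.C b) ^ j *
            (Polynomial.C c * Polynomial.X + Polynomial.C d) ^ (k - j))) *
        (MvPolynomial.X 0) ^ (k - j) * (MvPolynomial.X 1) ^ j := by
    rw [hF, sub_pow, map_sum, ← Finset.sum_range_reflect]
    simp only [Nat.add_sub_cancel]
    refine Finset.sum_congr rfl fun j hj => ?_
    rw [Finset.mem_range] at hj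
    have hjk : j ≤ k := Nat.lt_succ_iff.mp hj
    have e1 : k - (k - j) = j := Nat.sub_sub_self hjk
    rw [e1, Nat.choose_symm hjk]
    have key : (-1 : Polynomial S) ^ (k - j + k) *
          (((Polynomial.C c * Polynomial.X + Polynomial.C d).map
            (MvPolynomial.C : R →+* S)) * Polynomial.C (MvPolynomial.X 0)) ^ (k - j) *
          (((Polynomial.C a * Polynomial.X + Polynomial.C b).map
            (MvPolynomial.C : R →+* S)) * Polynomial.C (MvPolynomial.X 1)) ^ j *
          (k.choose j : Polynomial S)
        = ((-1 : S) ^ (k - j + k) * (k.choose j : S) *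
              (MvPolynomial.X 0 : S) ^ (k - j) * (MvPolynomial.X 1 : S) ^ j) •
            (((Polynomial.C a * Polynomial.X + Polynomial.C b) ^ j *
              (Polynomial.C c * Polynomial.X + Polynomial.C d) ^ (k - j)).map
                (MvPolynomial.C : R →+* S)) := by
      rw [Polynomial.smul_eq_C_mul]
      simp only [Polynomial.map_mul, Polynomial.map_pow, map_mul, map_pow, map_neg, map_one,
        map_natCast]
      ring
    rw [key, map_smul, psiAux_map]
    have hsgn : (-1 : S) ^ (k - j + k) = (-1 : S) ^ j := by
      rcases Nat.even_or_odd j with h | h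
      · rw [h.neg_one_pow,
          (by rw [Nat.even_iff] at *; omega : Even (k - j + k)).neg_one_pow]
      · rw [h.neg_one_pow,
          (by rw [Nat.odd_iff] at *; omega : Odd (k - j + k)).neg_one_pow]
    rw [smul_eq_mul, hsgn]
    ring
  have h2 : ψ (F ^ k) = ∑ ℓ ∈ range (k + 1),
      (-1 : S) ^ ℓ * (k.choose ℓ : S) *
        MvPolynomial.C (μ (Polynomial.X ^ ℓ)) *
        (MvPolynomial.C d * MvPolynomial.X 0 - MvPolynomial.C b * MvPolynomial.X 1) ^ (k - ℓ) *
        (-(MvPolynomial.C c : S) * MvPolynomial.X 0 + MvPolynomial.C a * MvPolynomial.X 1) ^ ℓ := by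
    have hF2 : F = Polynomial.X *
          Polynomial.C ((MvPolynomial.C c : S) * MvPolynomial.X 0 -
            MvPolynomial.C a * MvPolynomial.X 1) +
        Polynomial.C ((MvPolynomial.C d : S) * MvPolynomial.X 0 -
            MvPolynomial.C b * MvPolynomial.X 1) := by
      rw [hF]
      simp only [Polynomial.map_add, Polynomial.map_mul, Polynomial.map_C, Polynomial.map_X,
        map_sub, map_mul]
      ring
    rw [hF2, add_pow, map_sum]
    refine Finset.sum_congr rfl fun ℓ hℓ => ?_
    have key : (Polynomial.X * Polynomial.C ((MvPolynomial.C c : S) * MvPolynomial.X 0 -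
            MvPolynomial.C a * MvPolynomial.X 1)) ^ ℓ *
          (Polynomial.C ((MvPolynomial.C d : S) * MvPolynomial.X 0 -
            MvPolynomial.C b * MvPolynomial.X 1)) ^ (k - ℓ) * (k.choose ℓ : Polynomial S)
        = (((MvPolynomial.C c : S) * MvPolynomial.X 0 - MvPolynomial.C a * MvPolynomial.X 1) ^ ℓ *
            ((MvPolynomial.C d : S) * MvPolynomial.X 0 -
              MvPolynomial.C b * MvPolynomial.X 1) ^ (k - ℓ) * (k.choose ℓ : S)) •
          ((Polynomial.X ^ ℓ : Polynomial R).map (MvPolynomial.C : R →+* S)) := by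
      rw [Polynomial.smul_eq_C_mul]
      simp only [Polynomial.map_pow, Polynomial.map_X, map_mul, map_pow, map_sub, map_natCast,
        mul_pow]
      ring
    rw [key, map_smul, psiAux_map, smul_eq_mul,
      show ((MvPolynomial.C c : S) * MvPolynomial.X 0 - MvPolynomial.C a * MvPolynomial.X 1)
          = (-1) * (-(MvPolynomial.C c : S) * MvPolynomial.X 0 +
              MvPolynomial.C a * MvPolynomial.X 1) from by ring,
      mul_pow]
    ring
  rw [← h1, h2]
end

section
/- Fix a natural number n. Let V_{n,n} be the ℚ-subspace of ℚ[X₁, Y₁, X₂, Y₂] consisting of polynomials homogeneous of degree n in the pair (X₁, Y₁) and homogeneous of degree n in the pair (X₂, Y₂), and for m ∈ ℕ let V_m be the ℚ-subspace of ℚ[X, Y] of homogeneous polynomials of degree m. Let ∇ = ∂²/∂X₂∂Y₁ − ∂²/∂X₁∂Y₂. Then the ℚ-linear map V_{n,n} → ⊕_{i=0}^{n} V_{2n−2i} sending P to the tuple whose i-th entry is the polynomial obtained from ∇^i(P) by substituting X₁ = X₂ = X and Y₁ = Y₂ = Y, is bijective. -/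
open MvPolynomial

/-- The differential operator `∇ = ∂²/∂X₂∂Y₁ − ∂²/∂X₁∂Y₂` on `R[X₁,Y₁,X₂,Y₂]`,
where the variables `X₁, Y₁, X₂, Y₂` are indexed by `0, 1, 2, 3 : Fin 4`. -/
noncomputable def nabla (R : Type*) [CommRing R] :
    Module.End R (MvPolynomial (Fin 4) R) :=
  (pderiv (2 : Fin 4)).toLinearMap ∘ₗ (pderiv (1 : Fin 4)).toLinearMap -
    (pderiv (0 : Fin 4)).toLinearMap ∘ₗ (pderiv (3 : Fin 4)).toLinearMap

/-- The weight function on the four variables `X₁, Y₁, X₂, Y₂` recording the bidegree: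
`X₁, Y₁` have weight `(1,0)` and `X₂, Y₂` have weight `(0,1)`, so that the polynomials
of weighted degree `(n, n)` are exactly those homogeneous of degree `n` in `(X₁, Y₁)`
and of degree `n` in `(X₂, Y₂)`. -/
def bideg : Fin 4 → ℕ × ℕ := ![(1, 0), (1, 0), (0, 1), (0, 1)]

/-- The `i`-th Clebsch–Gordan projection: apply `∇^i` and then substitute
`X₁ = X₂ = X`, `Y₁ = Y₂ = Y`. -/
noncomputable def cgProj (i : ℕ) (P : MvPolynomial (Fin 4) ℚ) : MvPolynomial (Fin 2) ℚ :=
  aeval ![X 0, X 1, X 0, X 1] ((nabla ℚ ^ i) P)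

noncomputable section CG
namespace CG

abbrev R4 : Type := MvPolynomial (Fin 4) ℚ
abbrev R2 : Type := MvPolynomial (Fin 2) ℚ

def rmap : R4 →ₐ[ℚ] R2 := aeval ![X 0, X 1, X 0, X 1]

lemma wd4 (e : Fin 4 →₀ ℕ) :
    Finsupp.weight bideg e = (e 0 + e 1, e 2 + e 3) := by
  rw [Finsupp.weight_apply, Finsupp.sum_fintype]
  · simp [Fin.sum_univ_four, bideg, Prod.ext_iff]
  · intro i; exact zero_smul _ _

lemma deg2 (d : Fin 2 →₀ ℕ) : d.degree = d 0 + d 1 := by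
  rw [Finsupp.degree_apply, Finset.sum_subset (Finset.subset_univ d.support) (by simp)]
  exact Fin.sum_univ_two d

lemma pderiv_isWH {m : ℕ × ℕ} (i : Fin 4) {P : R4}
    (h : P.IsWeightedHomogeneous bideg (m + bideg i)) :
    (pderiv i P).IsWeightedHomogeneous bideg m := by
  have hP : pderiv i P = ∑ d ∈ P.support, pderiv i (monomial d (coeff d P)) := by
    rw [← map_sum, support_sum_monomial_coeff]
  rw [hP]
  apply IsWeightedHomogeneous.sum
  intro d hd
  rw [pderiv_monomial]
  by_cases h0 : d i = 0
  · rw [h0]; norm_num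
    exact isWeightedHomogeneous_zero ℚ bideg m
  · apply isWeightedHomogeneous_monomial
    have hw := h (mem_support_iff.mp hd)
    have hsub : (d - Finsupp.single i 1) + Finsupp.single i 1 = d := by
      ext j
      rcases eq_or_ne j i with rfl | hj
      · simp only [Finsupp.add_apply, Finsupp.tsub_apply, Finsupp.single_eq_same]
        omega
      · simp [Finsupp.single_apply, Ne.symm hj]
    have h1 : Finsupp.weight bideg (d - Finsupp.single i 1) + Finsupp.weight bideg
        (Finsupp.single i 1) = m + bideg i := by
      rw [← map_add, hsub, hw]
    have h2 : Finsupp.weight bideg (Finsupp.single i 1) = bideg i := by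
      rw [Finsupp.weight_apply, Finsupp.sum_single_index] <;> simp
    rw [h2] at h1
    exact add_right_cancel h1

lemma bideg0 : bideg 0 = (1,0) := rfl
lemma bideg1 : bideg 1 = (1,0) := rfl
lemma bideg2 : bideg 2 = (0,1) := rfl
lemma bideg3 : bideg 3 = (0,1) := rfl

lemma nabla_isWH {p q : ℕ} {P : R4}
    (h : P.IsWeightedHomogeneous bideg (p + 1, q + 1)) :
    (nabla ℚ P).IsWeightedHomogeneous bideg (p, q) := by
  have h1 : (pderiv (1 : Fin 4) P).IsWeightedHomogeneous bideg (p, q + 1) := by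
    apply pderiv_isWH
    convert h using 1
    simp [bideg]
  have h3 : (pderiv (3 : Fin 4) P).IsWeightedHomogeneous bideg (p + 1, q) := by
    apply pderiv_isWH
    convert h using 1
    simp [bideg]
  have h21 : (pderiv (2 : Fin 4) (pderiv (1 : Fin 4) P)).IsWeightedHomogeneous bideg (p, q) := by
    apply pderiv_isWH
    convert h1 using 1
    simp [bideg]
  have h03 : (pderiv (0 : Fin 4) (pderiv (3 : Fin 4) P)).IsWeightedHomogeneous bideg (p, q) := by
    apply pderiv_isWH
    convert h3 using 1
    simp [bideg]
  have : nabla ℚ P = pderiv (2 : Fin 4) (pderiv (1 : Fin 4) P)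
      - pderiv (0 : Fin 4) (pderiv (3 : Fin 4) P) := rfl
  rw [this]
  exact (weightedHomogeneousSubmodule ℚ bideg (p, q)).sub_mem h21 h03

lemma nabla_pow_isWH (k : ℕ) {p q : ℕ} {P : R4}
    (h : P.IsWeightedHomogeneous bideg (p + k, q + k)) :
    ((nabla ℚ ^ k) P).IsWeightedHomogeneous bideg (p, q) := by
  induction k generalizing P with
  | zero => simpa using h
  | succ k ih =>
    have : (nabla ℚ ^ (k + 1)) P = (nabla ℚ ^ k) (nabla ℚ P) := by
      rw [pow_succ, Module.End.mul_apply]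
    rw [this]
    apply ih
    apply nabla_isWH
    convert h using 2 <;> omega

lemma rmap_monomial (e : Fin 4 →₀ ℕ) (c : ℚ) :
    rmap (monomial e c) = C c * X 0 ^ (e 0) * X 1 ^ (e 1) * X 0 ^ (e 2) * X 1 ^ (e 3) := by
  rw [rmap, aeval_monomial, Finsupp.prod_pow]
  simp [Fin.prod_univ_four, algebraMap_eq, mul_assoc]

lemma rmap_isHom {p q : ℕ} {P : R4} (h : P.IsWeightedHomogeneous bideg (p, q)) :
    (rmap P).IsHomogeneous (p + q) := by
  have hP : rmap P = ∑ d ∈ P.support, rmap (monomial d (coeff d P)) := by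
    rw [← map_sum, support_sum_monomial_coeff]
  rw [hP]
  apply IsWeightedHomogeneous.sum
  intro d hd
  rw [rmap_monomial]
  have hw := h (mem_support_iff.mp hd)
  rw [wd4] at hw
  have h1 : d 0 + d 1 = p := congrArg Prod.fst hw
  have h2 : d 2 + d 3 = q := congrArg Prod.snd hw
  have : IsHomogeneous (C (coeff d P) * X 0 ^ (d 0) * X 1 ^ (d 1) * X 0 ^ (d 2) * X 1 ^ (d 3)
      : R2) (0 + 1 * d 0 + 1 * d 1 + 1 * d 2 + 1 * d 3) :=
    ((((isHomogeneous_C _ _).mul ((isHomogeneous_X _ _).pow _)).mul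
      ((isHomogeneous_X _ _).pow _)).mul ((isHomogeneous_X _ _).pow _)).mul
      ((isHomogeneous_X _ _).pow _)
  have hdeg : p + q = 0 + 1 * d 0 + 1 * d 1 + 1 * d 2 + 1 * d 3 := by omega
  rw [hdeg]
  exact this

lemma cgProj_eq (i : ℕ) (P : R4) : cgProj i P = rmap ((nabla ℚ ^ i) P) := rfl

lemma cgProj_isHom {n : ℕ} {P : R4} (h : P.IsWeightedHomogeneous bideg (n, n))
    (i : ℕ) (hi : i ≤ n) : (cgProj i P).IsHomogeneous (2 * n - 2 * i) := by
  rw [cgProj_eq]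
  have h1 : ((nabla ℚ ^ i) P).IsWeightedHomogeneous bideg (n - i, n - i) := by
    apply nabla_pow_isWH
    convert h using 2 <;> omega
  have hdeg : 2 * n - 2 * i = (n - i) + (n - i) := by omega
  rw [hdeg]
  exact rmap_isHom h1

lemma single_add_sub {d : Fin 4 →₀ ℕ} {i : Fin 4} (h0 : d i ≠ 0) :
    Finsupp.single i 1 + (d - Finsupp.single i 1) = d := by
  ext j
  rcases eq_or_ne j i with rfl | hj
  · simp only [Finsupp.add_apply, Finsupp.tsub_apply, Finsupp.single_eq_same]
    omega
  · simp [Finsupp.single_apply, Ne.symm hj]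

lemma euler_monomial (d : Fin 4 →₀ ℕ) (c : ℚ) :
    ∑ i : Fin 4, X i * pderiv i (monomial d c)
      = ((d 0 + d 1 + d 2 + d 3 : ℕ) : ℚ) • monomial d c := by
  have hterm : ∀ i : Fin 4, X i * pderiv i (monomial d c)
      = ((d i : ℕ) : ℚ) • monomial d c := by
    intro i
    rw [pderiv_monomial]
    by_cases h0 : d i = 0
    · simp [h0]
    · rw [X, monomial_mul, one_mul, single_add_sub h0, smul_monomial]
      rw [smul_eq_mul, mul_comm]
  simp only [hterm]
  rw [← Finset.sum_smul]
  congr 1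
  rw [Fin.sum_univ_four]
  push_cast
  ring

lemma euler {p q : ℕ} {P : R4} (h : P.IsWeightedHomogeneous bideg (p, q)) :
    ∑ i : Fin 4, X i * pderiv i P = ((p + q : ℕ) : ℚ) • P := by
  have hP : ∀ i : Fin 4, X i * pderiv i P
      = ∑ d ∈ P.support, X i * pderiv i (monomial d (coeff d P)) := by
    intro i
    rw [← Finset.mul_sum, ← map_sum, support_sum_monomial_coeff]
  simp only [hP]
  rw [Finset.sum_comm]
  conv_rhs => rw [← support_sum_monomial_coeff P]
  rw [Finset.smul_sum]
  apply Finset.sum_congr rfl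
  intro d hd
  rw [euler_monomial]
  have hw := h (mem_support_iff.mp hd)
  rw [wd4] at hw
  have h1 : d 0 + d 1 = p := congrArg Prod.fst hw
  have h2 : d 2 + d 3 = q := congrArg Prod.snd hw
  congr 2
  omega

/-- `Ω = X₁Y₂ − X₂Y₁`. -/
def Om : R4 := X 0 * X 3 - X 2 * X 1

lemma Om_isWH : Om.IsWeightedHomogeneous bideg (1, 1) := by
  apply (weightedHomogeneousSubmodule ℚ bideg (1,1)).sub_mem
  · have := (isWeightedHomogeneous_X ℚ bideg (0 : Fin 4)).mul
      (isWeightedHomogeneous_X ℚ bideg (3 : Fin 4))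
    convert this using 1
    exact Iff.rfl
  · have := (isWeightedHomogeneous_X ℚ bideg (2 : Fin 4)).mul
      (isWeightedHomogeneous_X ℚ bideg (1 : Fin 4))
    convert this using 1
    exact Iff.rfl

lemma nabla_omega {p q : ℕ} {F : R4} (h : F.IsWeightedHomogeneous bideg (p, q)) :
    nabla ℚ (Om * F) = Om * nabla ℚ F - ((p + q + 2 : ℕ) : ℚ) • F := by
  have he := euler h
  have hd : ∀ G : R4, nabla ℚ G = pderiv (2:Fin 4) (pderiv (1:Fin 4) G)
      - pderiv (0:Fin 4) (pderiv (3:Fin 4) G) := fun _ => rfl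
  rw [hd, hd, Om]
  rw [Fin.sum_univ_four, smul_eq_C_mul, Nat.cast_add, map_add] at he
  have hc : ((p + q + 2 : ℕ) : ℚ) = ((p : ℚ) + (q : ℚ)) + 2 := by push_cast; ring
  rw [hc, smul_eq_C_mul, map_add, map_add, map_ofNat]
  simp only [pderiv_mul, map_sub, map_add, pderiv_X_self,
    pderiv_X_of_ne (by decide : (0 : Fin 4) ≠ 1), pderiv_X_of_ne (by decide : (0 : Fin 4) ≠ 2),
    pderiv_X_of_ne (by decide : (0 : Fin 4) ≠ 3), pderiv_X_of_ne (by decide : (1 : Fin 4) ≠ 0),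
    pderiv_X_of_ne (by decide : (1 : Fin 4) ≠ 2), pderiv_X_of_ne (by decide : (1 : Fin 4) ≠ 3),
    pderiv_X_of_ne (by decide : (2 : Fin 4) ≠ 0), pderiv_X_of_ne (by decide : (2 : Fin 4) ≠ 1),
    pderiv_X_of_ne (by decide : (2 : Fin 4) ≠ 3), pderiv_X_of_ne (by decide : (3 : Fin 4) ≠ 0),
    pderiv_X_of_ne (by decide : (3 : Fin 4) ≠ 1), pderiv_X_of_ne (by decide : (3 : Fin 4) ≠ 2),
    map_zero, map_one, map_neg, neg_mul, mul_neg, zero_mul, mul_zero, one_mul, mul_one, zero_add, add_zero, pderiv_one,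
    zero_sub, sub_zero]
  linear_combination -he

/-- The scalar `k(2m+3-k)` appearing in `∇^k (Ω F) = Ω ∇^k F - sc • ∇^(k-1) F`. -/
def sc (m k : ℕ) : ℚ := (k : ℚ) * (2 * m + 3 - k)

lemma sc_pos {m k : ℕ} (h1 : 1 ≤ k) (h2 : k ≤ m + 1) : 0 < sc m k := by
  apply mul_pos
  · exact_mod_cast Nat.cast_pos.mpr h1
  · have : (k : ℚ) ≤ (m : ℚ) + 1 := by exact_mod_cast h2
    have h3 : (0:ℚ) ≤ (m:ℚ) := Nat.cast_nonneg m
    linarith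

lemma nabla_pow_succ (k : ℕ) (P : R4) :
    (nabla ℚ ^ (k + 1)) P = nabla ℚ ((nabla ℚ ^ k) P) := by
  rw [pow_succ']; rfl

lemma nabla_pow_omega {m : ℕ} {F : R4} (h : F.IsWeightedHomogeneous bideg (m, m)) :
    ∀ k, k ≤ m → (nabla ℚ ^ (k + 1)) (Om * F) =
      Om * (nabla ℚ ^ (k + 1)) F - sc m (k + 1) • (nabla ℚ ^ k) F := by
  intro k
  induction k with
  | zero =>
    intro _
    have h1 := nabla_omega h
    simp only [zero_add, pow_one, pow_zero, Module.End.one_apply]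
    rw [h1]
    congr 2
    · unfold sc; push_cast; ring
  | succ k ih =>
    intro hk1
    have hk : k ≤ m := by omega
    have hstep := nabla_pow_succ (k + 1) (Om * F)
    rw [hstep, ih hk, map_sub, map_smul]
    have hWH : ((nabla ℚ ^ (k + 1)) F).IsWeightedHomogeneous bideg (m - (k+1), m - (k+1)) := by
      apply nabla_pow_isWH
      have : (m - (k+1) + (k+1), m - (k+1) + (k+1)) = (m, m) := by
        have : m - (k+1) + (k+1) = m := by omega
        rw [this]
      rw [this]
      exact h
    rw [nabla_omega hWH]
    have h1 := (nabla_pow_succ k F).symm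
    have h2 := (nabla_pow_succ (k + 1) F).symm
    rw [h1, h2, sub_sub, ← add_smul]
    congr 2
    have hc : ((m - (k+1) : ℕ) : ℚ) = (m : ℚ) - (k : ℚ) - 1 := by
      rw [Nat.cast_sub hk1]; push_cast; ring
    rw [show ((m - (k+1) + (m - (k+1)) + 2 : ℕ) : ℚ)
        = ((m - (k+1) : ℕ) : ℚ) + ((m - (k+1) : ℕ) : ℚ) + 2 by push_cast; ring, hc]
    unfold sc; push_cast; ring

lemma rmap_Om : rmap Om = 0 := by
  rw [Om, rmap, map_sub, map_mul, map_mul]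
  simp only [aeval_X]
  show (![X 0, X 1, X 0, X 1] 0 : R2) * ![X 0, X 1, X 0, X 1] 3
      - ![X 0, X 1, X 0, X 1] 2 * ![X 0, X 1, X 0, X 1] 1 = 0
  norm_num
  simp [Matrix.cons_val]

lemma rmap_Om_mul (G : R4) : rmap (Om * G) = 0 := by
  rw [map_mul, rmap_Om, zero_mul]

lemma cgProj_omega {m : ℕ} {F : R4} (h : F.IsWeightedHomogeneous bideg (m, m))
    {k : ℕ} (hk : k ≤ m) :
    cgProj (k + 1) (Om * F) = -(sc m (k + 1)) • cgProj k F := by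
  rw [cgProj_eq, nabla_pow_omega h k hk, map_sub, rmap_Om_mul, zero_sub,
    map_smul, neg_smul]
  rfl

lemma monomial2_eq (d : Fin 2 →₀ ℕ) (c : ℚ) :
    (monomial d c : R2) = C c * X 0 ^ (d 0) * X 1 ^ (d 1) := by
  rw [monomial_eq, Finsupp.prod_pow]
  rw [Fin.prod_univ_two, mul_assoc]

/-- Lift an exponent vector of a degree-`2m` monomial in 2 variables to an exponent
vector of bidegree `(m,m)` in 4 variables. -/
def lift4 (m : ℕ) (d : Fin 2 →₀ ℕ) : Fin 4 →₀ ℕ :=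
  Finsupp.equivFunOnFinite.symm
    ![min (d 0) m, m - min (d 0) m, d 0 - min (d 0) m, m - (d 0 - min (d 0) m)]

lemma lift4_apply (m : ℕ) (d : Fin 2 →₀ ℕ) (j : Fin 4) :
    lift4 m d j = ![min (d 0) m, m - min (d 0) m,
      d 0 - min (d 0) m, m - (d 0 - min (d 0) m)] j := rfl

lemma rmap_section {m : ℕ} {Q : R2} (hQ : Q.IsHomogeneous (2 * m)) :
    ∃ L : R4, L.IsWeightedHomogeneous bideg (m, m) ∧ rmap L = Q := by
  refine ⟨∑ d ∈ Q.support, monomial (lift4 m d) (coeff d Q), ?_, ?_⟩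
  · apply IsWeightedHomogeneous.sum
    intro d hd
    apply isWeightedHomogeneous_monomial
    have hdeg := hQ (mem_support_iff.mp hd)
    rw [show (Finsupp.weight 1 : (Fin 2 →₀ ℕ) →+ ℕ) = Finsupp.degree from Finsupp.degree_eq_weight_one.symm, deg2] at hdeg
    rw [wd4, Prod.mk.injEq]
    simp only [lift4_apply]
    norm_num
    simp only [Matrix.cons_val]
    all_goals omega
  · rw [map_sum]
    conv_rhs => rw [← support_sum_monomial_coeff Q]
    apply Finset.sum_congr rfl
    intro d hd
    have hdeg := hQ (mem_support_iff.mp hd)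
    rw [show (Finsupp.weight 1 : (Fin 2 →₀ ℕ) →+ ℕ) = Finsupp.degree from Finsupp.degree_eq_weight_one.symm, deg2] at hdeg
    rw [rmap_monomial, monomial2_eq]
    simp only [lift4_apply]
    norm_num
    simp only [Matrix.cons_val]
    have h0 : (X 0 : R2) ^ (d 0 ⊓ m) * X 0 ^ (d 0 - d 0 ⊓ m) = X 0 ^ (d 0) := by
      rw [← pow_add]; congr 1; omega
    have h1 : (X 1 : R2) ^ (m - d 0 ⊓ m) * X 1 ^ (m - (d 0 - d 0 ⊓ m)) = X 1 ^ (d 1) := by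
      rw [← pow_add]; congr 1; omega
    rw [← h0, ← h1]
    ring

lemma cgProj_zero (P : R4) : cgProj 0 P = rmap P := by
  rw [cgProj_eq, pow_zero]; rfl

lemma cgProj_add (i : ℕ) (P Q : R4) : cgProj i (P + Q) = cgProj i P + cgProj i Q := by
  rw [cgProj_eq, cgProj_eq, cgProj_eq, map_add, map_add]

lemma main_surj : ∀ n : ℕ, ∀ Q : Fin (n+1) → R2,
    (∀ i : Fin (n+1), (Q i).IsHomogeneous (2 * n - 2 * (i:ℕ))) →
    ∃ P : R4, P.IsWeightedHomogeneous bideg (n, n) ∧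
      ∀ i : Fin (n+1), cgProj (i:ℕ) P = Q i := by
  intro n
  induction n with
  | zero =>
    intro Q hQ
    obtain ⟨L, hL, hrL⟩ := rmap_section (m := 0) (by simpa using hQ 0)
    refine ⟨L, hL, fun i => ?_⟩
    have hi : i = 0 := Fin.ext (by omega)
    subst hi
    rw [show ((0 : Fin 1) : ℕ) = 0 from rfl, cgProj_zero, hrL]
  | succ n ih =>
    intro Q hQ
    have h0 : (Q 0).IsHomogeneous (2 * (n+1)) := by simpa using hQ 0
    obtain ⟨L, hL, hrL⟩ := rmap_section h0
    set Q' : Fin (n+1) → R2 := fun j =>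
      (-(sc n ((j:ℕ)+1)))⁻¹ • (Q j.succ - cgProj ((j:ℕ)+1) L) with hQ'def
    have hQ' : ∀ j : Fin (n+1), (Q' j).IsHomogeneous (2*n - 2*(j:ℕ)) := by
      intro j
      show Q' j ∈ homogeneousSubmodule (Fin 2) ℚ (2*n - 2*(j:ℕ))
      apply Submodule.smul_mem
      apply Submodule.sub_mem
      · have h1 := hQ j.succ
        have he : 2*(n+1) - 2*((j.succ : Fin (n+2)):ℕ) = 2*n - 2*(j:ℕ) := by
          rw [Fin.val_succ]; omega
        rwa [he] at h1
      · have h2 := cgProj_isHom hL ((j:ℕ)+1) (by omega)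
        have he : 2*(n+1) - 2*((j:ℕ)+1) = 2*n - 2*(j:ℕ) := by omega
        rwa [he] at h2
    obtain ⟨M, hM, hcM⟩ := ih Q' hQ'
    have hsc : (-(sc n ((0:ℕ)+1))) ≠ 0 := by
      exact neg_ne_zero.mpr (ne_of_gt (sc_pos (by omega) (by omega)))
    refine ⟨L + Om * M, ?_, ?_⟩
    · show L + Om * M ∈ weightedHomogeneousSubmodule ℚ bideg (n+1, n+1)
      apply Submodule.add_mem _ hL
      have h3 := Om_isWH.mul hM
      have he : ((1:ℕ),(1:ℕ)) + (n, n) = (n+1, n+1) := by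
        rw [Prod.mk_add_mk, Prod.mk.injEq]
        omega
      rwa [he] at h3
    · intro i
      induction i using Fin.cases with
      | zero =>
        rw [show ((0 : Fin (n+2)) : ℕ) = 0 from rfl, cgProj_zero, map_add, hrL,
          rmap_Om_mul, add_zero]
      | succ j =>
        have hjne : (-(sc n ((j:ℕ)+1))) ≠ 0 :=
          neg_ne_zero.mpr (ne_of_gt (sc_pos (by omega) (by omega)))
        rw [Fin.val_succ, cgProj_add, cgProj_omega hM (j.is_le : (j:ℕ) ≤ n), hcM j, hQ'def]
        simp only
        rw [smul_inv_smul₀ hjne]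
        ring

def S4 (n : ℕ) : Set (Fin 4 →₀ ℕ) := {d | Finsupp.weight bideg d = (n, n)}
def S2 (m : ℕ) : Set (Fin 2 →₀ ℕ) := {d | Finsupp.degree d = m}

def eq4 (n : ℕ) : ↥(S4 n) ≃ Fin (n+1) × Fin (n+1) where
  toFun d :=
    (⟨d.1 0, by
      have h : Finsupp.weight bideg d.1 = ((n:ℕ), (n:ℕ)) := d.2
      rw [wd4, Prod.mk.injEq] at h
      omega⟩,
     ⟨d.1 2, by
      have h : Finsupp.weight bideg d.1 = ((n:ℕ), (n:ℕ)) := d.2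
      rw [wd4, Prod.mk.injEq] at h
      omega⟩)
  invFun p :=
    ⟨Finsupp.equivFunOnFinite.symm ![(p.1 : ℕ), n - p.1, (p.2 : ℕ), n - p.2], by
      have h1 : (p.1 : ℕ) ≤ n := by omega
      have h2 : (p.2 : ℕ) ≤ n := by omega
      show Finsupp.weight bideg _ = ((n:ℕ), (n:ℕ))
      rw [wd4, Prod.mk.injEq]
      constructor <;> simp <;> omega⟩
  left_inv d := by
    have h : Finsupp.weight bideg d.1 = ((n:ℕ), (n:ℕ)) := d.2
    rw [wd4, Prod.mk.injEq] at h
    apply Subtype.ext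
    apply Finsupp.ext
    intro j
    fin_cases j <;> simp <;> omega
  right_inv p := by
    apply Prod.ext <;> apply Fin.ext <;> simp

def eq2 (m : ℕ) : ↥(S2 m) ≃ Fin (m+1) where
  toFun d := ⟨d.1 0, by
    have h : Finsupp.degree d.1 = m := d.2
    rw [deg2] at h
    omega⟩
  invFun k :=
    ⟨Finsupp.equivFunOnFinite.symm ![(k : ℕ), m - k], by
      have h1 : (k : ℕ) ≤ m := by omega
      show Finsupp.degree _ = m
      rw [deg2]
      simp
      omega⟩
  left_inv d := by
    have h : Finsupp.degree d.1 = m := d.2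
    rw [deg2] at h
    apply Subtype.ext
    apply Finsupp.ext
    intro j
    fin_cases j <;> simp <;> omega
  right_inv k := by
    apply Fin.ext
    simp

noncomputable instance (n : ℕ) : Fintype ↥(S4 n) := Fintype.ofEquiv _ (eq4 n).symm
noncomputable instance (m : ℕ) : Fintype ↥(S2 m) := Fintype.ofEquiv _ (eq2 m).symm

noncomputable def equivV4 (n : ℕ) :
    (weightedHomogeneousSubmodule ℚ bideg (n, n)) ≃ₗ[ℚ] (↥(S4 n) → ℚ) :=
  ((LinearEquiv.ofEq _ _
      (weightedHomogeneousSubmodule_eq_finsupp_supported ℚ bideg (n, n))).trans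
    (AddMonoidAlgebra.supportedEquivFinsupp (S4 n))).trans
    (Finsupp.linearEquivFunOnFinite ℚ ℚ _)

noncomputable def equivV2 (m : ℕ) :
    (homogeneousSubmodule (Fin 2) ℚ m) ≃ₗ[ℚ] (↥(S2 m) → ℚ) :=
  ((LinearEquiv.ofEq _ _
      (homogeneousSubmodule_eq_finsupp_supported (Fin 2) ℚ m)).trans
    (AddMonoidAlgebra.supportedEquivFinsupp (S2 m))).trans
    (Finsupp.linearEquivFunOnFinite ℚ ℚ _)

instance (n : ℕ) : FiniteDimensional ℚ (weightedHomogeneousSubmodule ℚ bideg (n, n)) :=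
  Module.Finite.equiv (equivV4 n).symm

instance (m : ℕ) : FiniteDimensional ℚ (homogeneousSubmodule (Fin 2) ℚ m) :=
  Module.Finite.equiv (equivV2 m).symm

lemma finrank_V4 (n : ℕ) :
    Module.finrank ℚ (weightedHomogeneousSubmodule ℚ bideg (n, n)) = (n+1) * (n+1) := by
  rw [(equivV4 n).finrank_eq, Module.finrank_pi, Fintype.card_congr (eq4 n)]
  simp

lemma finrank_V2 (m : ℕ) :
    Module.finrank ℚ (homogeneousSubmodule (Fin 2) ℚ m) = m + 1 := by
  rw [(equivV2 m).finrank_eq, Module.finrank_pi, Fintype.card_congr (eq2 m)]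
  simp

lemma sum_odds : ∀ k : ℕ, ∑ j ∈ Finset.range k, (2 * j + 1) = k * k := by
  intro k
  induction k with
  | zero => simp
  | succ k ih => rw [Finset.sum_range_succ, ih]; ring

set_option synthInstance.maxHeartbeats 1000000 in
lemma finrank_target (n : ℕ) :
    Module.finrank ℚ (Π i : Fin (n+1), homogeneousSubmodule (Fin 2) ℚ (2*n - 2*(i:ℕ)))
      = (n+1) * (n+1) := by
  rw [Module.finrank_pi_fintype]
  have h1 : ∀ i : Fin (n+1),
      Module.finrank ℚ (homogeneousSubmodule (Fin 2) ℚ (2*n - 2*(i:ℕ)))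
        = 2*n - 2*(i:ℕ) + 1 := fun i => finrank_V2 _
  simp only [h1]
  rw [Fin.sum_univ_eq_sum_range (fun k => 2*n - 2*k + 1) (n+1), ← Finset.sum_range_reflect]
  rw [show ∑ j ∈ Finset.range (n+1), (2*n - 2*(n+1-1-j) + 1)
      = ∑ j ∈ Finset.range (n+1), (2*j+1) from
    Finset.sum_congr rfl fun j hj => by rw [Finset.mem_range] at hj; omega]
  rw [sum_odds]

noncomputable def cgL (i : ℕ) : R4 →ₗ[ℚ] R2 := rmap.toLinearMap ∘ₗ (nabla ℚ ^ i)

lemma cgL_apply (i : ℕ) (P : R4) : cgL i P = cgProj i P := rfl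

noncomputable def Phi (n : ℕ) :
    (weightedHomogeneousSubmodule ℚ bideg (n, n)) →ₗ[ℚ]
      (Π i : Fin (n+1), homogeneousSubmodule (Fin 2) ℚ (2*n - 2*(i:ℕ))) :=
  LinearMap.pi fun i =>
    ((cgL (i : ℕ)).comp (Submodule.subtype _)).codRestrict _
      (fun P => cgProj_isHom P.2 (i : ℕ) i.is_le)

lemma Phi_apply (n : ℕ) (P) (i : Fin (n+1)) :
    ((Phi n P) i : R2) = cgProj (i : ℕ) (P : R4) := rfl

lemma Phi_surj (n : ℕ) : Function.Surjective (Phi n) := by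
  intro q
  obtain ⟨P, hP, heq⟩ := main_surj n (fun i => (q i : R2)) (fun i => (q i).2)
  refine ⟨⟨P, hP⟩, funext fun i => Subtype.ext ?_⟩
  rw [Phi_apply]
  exact heq i

lemma Phi_inj (n : ℕ) : Function.Injective (Phi n) :=
  (LinearMap.injective_iff_surjective_of_finrank_eq_finrank
    (by rw [finrank_V4, finrank_target])).mpr (Phi_surj n)

end CG
end CG

/-- Clebsch–Gordan decomposition: the map `V_{n,n} → ⊕_{i=0}^{n} V_{2n−2i}`,
`P ↦ (cgProj i P)_{i}`, is well defined and bijective. -/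
theorem clebsch_gordan (n : ℕ) :
    (∀ P ∈ weightedHomogeneousSubmodule ℚ bideg (n, n), ∀ i : Fin (n + 1),
        cgProj (i : ℕ) P ∈ homogeneousSubmodule (Fin 2) ℚ (2 * n - 2 * (i : ℕ))) ∧
    (∀ Q : (i : Fin (n + 1)) → homogeneousSubmodule (Fin 2) ℚ (2 * n - 2 * (i : ℕ)),
        ∃! P, P ∈ weightedHomogeneousSubmodule ℚ bideg (n, n) ∧
          ∀ i : Fin (n + 1), cgProj (i : ℕ) P = (Q i : MvPolynomial (Fin 2) ℚ)) := by
  constructor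
  · intro P hP i
    exact CG.cgProj_isHom hP (i : ℕ) i.is_le
  · intro Q
    obtain ⟨P, hP, heq⟩ := CG.main_surj n (fun i => (Q i : MvPolynomial (Fin 2) ℚ))
      (fun i => (Q i).2)
    refine ⟨P, ⟨hP, heq⟩, ?_⟩
    rintro y ⟨hy1, hy2⟩
    have h : CG.Phi n ⟨y, hy1⟩ = CG.Phi n ⟨P, hP⟩ := by
      funext i
      apply Subtype.ext
      rw [CG.Phi_apply, CG.Phi_apply, hy2 i, heq i]
    exact congrArg Subtype.val (CG.Phi_inj n h)
end

section
/- Let X be a compact topological space, R a commutative ring, and A a commutative R-algebra with structure map φ : R → A. Then the natural A-linear map LC(X, R) ⊗_R A → LC(X, A), determined by f ⊗ a ↦ a · (φ ∘ f), is bijective, where LC(X, R) denotes the R-module of locally constant functions X → R and LC(X, A) the A-module of locally constant functions X → A. -/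
open TensorProduct

open Classical in
/-- Characteristic function (valued in `R`) of the fiber of `f` over `v`. -/
noncomputable def LCcharFn {X : Type*} [TopologicalSpace X] {Y : Type*} (R : Type*) [CommRing R]
    (f : LocallyConstant X Y) (v : Y) : LocallyConstant X R :=
  f.map (fun y => if y = v then 1 else 0)

open Classical in
theorem LCcharFn_apply {X : Type*} [TopologicalSpace X] {Y : Type*} (R : Type*) [CommRing R]
    (f : LocallyConstant X Y) (v : Y) (x : X) :
    LCcharFn R f v x = if f x = v then (1 : R) else 0 := rfl

theorem LC_sum_apply {X : Type*} [TopologicalSpace X] {R : Type*} [CommRing R]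
    {ι : Type*} (s : Finset ι) (f : ι → LocallyConstant X R) (x : X) :
    (∑ i ∈ s, f i) x = ∑ i ∈ s, f i x := by
  classical
  induction s using Finset.induction with
  | empty => simp
  | insert _ _ h ih => rw [Finset.sum_insert h, Finset.sum_insert h, LocallyConstant.add_apply, ih]

/-- For a compact space `X` and a commutative `R`-algebra `A`, the natural map
`LC(X, R) ⊗_R A → LC(X, A)` determined by `f ⊗ a ↦ a • (φ ∘ f)` (where
`φ : R → A` is the structure map) is bijective. -/
theorem locallyConstant_baseChange (X : Type*) [TopologicalSpace X] [CompactSpace X]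
    (R A : Type*) [CommRing R] [CommRing A] [Algebra R A]
    (T : LocallyConstant X R ⊗[R] A →ₗ[R] LocallyConstant X A)
    (hT : ∀ (f : LocallyConstant X R) (a : A),
      T (f ⊗ₜ a) = a • f.map (algebraMap R A)) :
    Function.Bijective T := by
  classical
  constructor
  · rw [injective_iff_map_eq_zero]
    intro t ht
    obtain ⟨s, rfl⟩ := TensorProduct.exists_finset t
    -- the joint locally constant function
    set Q : LocallyConstant X (↥s → R) :=
      ⟨fun x p => p.1.1 x, by
        rw [IsLocallyConstant.iff_eventually_eq]
        intro x
        have h : ∀ p : ↥s, ∀ᶠ y in nhds x, p.1.1 y = p.1.1 x := fun p =>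
          (p.1.1).isLocallyConstant.eventually_eq x
        filter_upwards [Filter.eventually_all.2 h] with y hy
        exact funext hy⟩ with hQ
    set V : Finset (↥s → R) := Q.range_finite.toFinset with hV
    set c : (↥s → R) → A := fun v => ∑ p ∈ s.attach, v p • p.1.2 with hc
    have hQmem : ∀ x, Q x ∈ V := by
      intro x
      simp [hV, Set.Finite.mem_toFinset]
    -- rewrite t via characteristic functions
    have key : ∑ p ∈ s, p.1 ⊗ₜ[R] p.2 = ∑ v ∈ V, LCcharFn R Q v ⊗ₜ[R] c v := by
      rw [← Finset.sum_attach s fun p => p.1 ⊗ₜ[R] p.2]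
      have expand : ∀ p : ↥s, p.1.1 = ∑ v ∈ V, v p • LCcharFn R Q v := by
        intro p
        ext x
        rw [LC_sum_apply]
        simp only [LocallyConstant.smul_apply, LCcharFn_apply, smul_eq_mul, mul_ite,
          mul_one, mul_zero]
        rw [Finset.sum_ite_eq V (Q x) (fun v => v p)]
        exact (if_pos (hQmem x)).symm
      calc ∑ p ∈ s.attach, p.1.1 ⊗ₜ[R] p.1.2
          = ∑ p ∈ s.attach, ∑ v ∈ V, LCcharFn R Q v ⊗ₜ[R] (v p • p.1.2) := by
            refine Finset.sum_congr rfl fun p _ => ?_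
            rw [expand p, TensorProduct.sum_tmul]
            exact Finset.sum_congr rfl fun v _ => (TensorProduct.smul_tmul _ _ _)
        _ = ∑ v ∈ V, LCcharFn R Q v ⊗ₜ[R] c v := by
            rw [Finset.sum_comm]
            refine Finset.sum_congr rfl fun v _ => ?_
            rw [hc, TensorProduct.tmul_sum]
    rw [key] at ht ⊢
    have hc0 : ∀ v ∈ V, c v = 0 := by
      intro v hv
      rw [hV, Set.Finite.mem_toFinset] at hv
      obtain ⟨x, hx⟩ := hv
      have := congrArg (fun g : LocallyConstant X A => g x) ht
      simp only [map_sum, hT, LocallyConstant.zero_apply] at this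
      rw [LC_sum_apply] at this
      simp only [LocallyConstant.smul_apply, LocallyConstant.map_apply, Function.comp_apply,
        LCcharFn_apply, smul_eq_mul] at this
      simp only [apply_ite (algebraMap R A), map_one, map_zero, mul_ite, mul_one, mul_zero] at this
      rw [hx, Finset.sum_ite_eq V v c, if_pos (hx ▸ hQmem x)] at this
      exact this
    calc ∑ v ∈ V, LCcharFn R Q v ⊗ₜ[R] c v
        = ∑ v ∈ V, LCcharFn R Q v ⊗ₜ[R] (0 : A) := by
          exact Finset.sum_congr rfl fun v hv => by rw [hc0 v hv]
      _ = 0 := by simp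
  · intro g
    refine ⟨∑ a ∈ g.range_finite.toFinset, LCcharFn R g a ⊗ₜ[R] a, ?_⟩
    rw [map_sum]
    ext x
    simp only [hT]
    rw [LC_sum_apply]
    simp only [LocallyConstant.smul_apply, LocallyConstant.map_apply, Function.comp_apply,
      LCcharFn_apply, smul_eq_mul]
    simp only [apply_ite (algebraMap R A), map_one, map_zero, mul_ite, mul_one, mul_zero]
    rw [Finset.sum_ite_eq _ (g x) (fun a => a), if_pos]
    simp [Set.Finite.mem_toFinset]
end
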